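/- Let a > b > 0 be reals, f(x) = (x²-a)/(x²-b), A₂ = !![1,-a;1,-b], and z(x) = (v* A₂ v)/(v* v) with v = (x, i f(x)). If x₀ is a nonzero real with x₀² ≠ b and f(x₀) = x₀, then z(x₀) = (1-b)/2 - i(1+a)/2. -/
import Mathlib


open Matrix Complex

theorem z_fixed_point_vertex (a b : ℝ) (ha : a > b) (hb : b > 0)
    (f : ℝ → ℝ) (hf : f = fun x => (x ^ 2 - a) / (x ^ 2 - b))
    (A₂ : Matrix (Fin 2) (Fin 2) ℂ) (hA : A₂ = !![1, -(a:ℂ); 1, -(b:ℂ)])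
    (v : ℝ → Fin 2 → ℂ) (hv : v = fun (x : ℝ) => ![(x : ℂ), Complex.I * (f x : ℂ)])
    (z : ℝ → ℂ) (hz : z = fun x => (star (v x) ⬝ᵥ (A₂ *ᵥ v x)) / (star (v x) ⬝ᵥ v x))
    (x₀ : ℝ) (hx0 : x₀ ≠ 0) (hxb : x₀ ^ 2 ≠ b) (hfix : f x₀ = x₀) :
    z x₀ = ((1 - b) / 2 : ℝ) - Complex.I * ((1 + a) / 2 : ℝ) := by
  subst hA hv hz
  have hx0' : (x₀ : ℂ) ≠ 0 := Complex.ofReal_ne_zero.mpr hx0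
  simp only [hfix, Matrix.mulVec, dotProduct, Fin.sum_univ_two, Pi.star_apply,
    RCLike.star_def, _root_.map_mul, Complex.conj_ofReal, Complex.conj_I,
    show (!![1, -(a:ℂ); 1, -(b:ℂ)] 0 0) = 1 from rfl,
    show (!![1, -(a:ℂ); 1, -(b:ℂ)] 0 1) = -(a:ℂ) from rfl,
    show (!![1, -(a:ℂ); 1, -(b:ℂ)] 1 0) = 1 from rfl,
    show (!![1, -(a:ℂ); 1, -(b:ℂ)] 1 1) = -(b:ℂ) from rfl,
    show (![(x₀:ℂ), Complex.I * (x₀:ℂ)] 0) = (x₀:ℂ) from rfl,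
    show (![(x₀:ℂ), Complex.I * (x₀:ℂ)] 1) = Complex.I * (x₀:ℂ) from rfl]
  have hden : (x₀:ℂ) * x₀ + -Complex.I * x₀ * (Complex.I * x₀) = 2 * x₀ ^ 2 := by
    linear_combination (-(x₀:ℂ)^2) * Complex.I_sq
  rw [hden, div_eq_iff (mul_ne_zero two_ne_zero (pow_ne_zero 2 hx0'))]
  push_cast
  linear_combination ((b:ℂ) * (x₀:ℂ)^2) * Complex.I_sq
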